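/- Conditional probability estimate for the bad events of the coupled chain: Assume hypothesis (C) with constants q ∈ [0,1) and C > 0, and fix x, x' ∈ X. Then for the coupled chain (x_k, x_k') on (Ω,P) and for every k ∈ ℕ, the conditional expectation satisfies, P-almost surely, E[1_{C_k} | F_k] ≤ C·q^k·d(x,x'), where C_k = B_k ∩ A_k^c, A_k = {ω : d(x_{k+1}(ω), x_{k+1}'(ω)) ≤ q·d(x_k(ω), x_k'(ω))}, and B_k = ∩_{j=0}^{k−1} A_j (with B_0 = Ω). -/

import Mathlib

open MeasureTheory Filter Topology
open scoped ENNReal NNReal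

noncomputable def FK {X : Type*} [MeasurableSpace X] (κ : X → Measure X) (V f : X → ℝ) (x : X) : ℝ :=
  ∫ y, Real.exp (V y) * f y ∂(κ x)

noncomputable def FKiter {X : Type*} [MeasurableSpace X] (κ : X → Measure X) (V : X → ℝ) :
    ℕ → (X → ℝ) → X → ℝ
  | 0 => fun f => f
  | n + 1 => fun f => FK κ V (FKiter κ V n f)

noncomputable def supNorm {X : Type*} (f : X → ℝ) : ℝ := ⨆ x, |f x|

noncomputable def lipConst {X : Type*} [MetricSpace X] (f : X → ℝ) : ℝ :=
  sSup {c | ∃ x y, x ≠ y ∧ c = |f x - f y| / dist x y}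

noncomputable def lipNorm {X : Type*} [MetricSpace X] (f : X → ℝ) : ℝ := supNorm f + lipConst f

/-- The coupled chain `(x_k, x_k')` driven by the maps `R, R'` and the noise sequence `ω`. -/
def chain {X Ω₀ : Type*} (R R' : X → X → Ω₀ → X) (x x' : X) : ℕ → (ℕ → Ω₀) → X × X
  | 0 => fun _ => (x, x')
  | k + 1 => fun ω =>
      (R (chain R R' x x' k ω).1 (chain R R' x x' k ω).2 (ω k),
       R' (chain R R' x x' k ω).1 (chain R R' x x' k ω).2 (ω k))

/-- The squeezing event `A_j` for the coupled chain. -/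
def eventA {X Ω₀ : Type*} [MetricSpace X] (R R' : X → X → Ω₀ → X) (x x' : X) (q : ℝ)
    (j : ℕ) : Set (ℕ → Ω₀) :=
  {ω | dist (chain R R' x x' (j + 1) ω).1 (chain R R' x x' (j + 1) ω).2
        ≤ q * dist (chain R R' x x' j ω).1 (chain R R' x x' j ω).2}

/-- The good event `B_k = ∩_{j<k} A_j`. -/
def eventB {X Ω₀ : Type*} [MetricSpace X] (R R' : X → X → Ω₀ → X) (x x' : X) (q : ℝ)
    (k : ℕ) : Set (ℕ → Ω₀) :=
  ⋂ j ∈ Finset.range k, eventA R R' x x' q j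

/-- The bad event `C_k = B_k ∩ A_kᶜ`. -/
def eventC {X Ω₀ : Type*} [MetricSpace X] (R R' : X → X → Ω₀ → X) (x x' : X) (q : ℝ)
    (k : ℕ) : Set (ℕ → Ω₀) :=
  eventB R R' x x' q k ∩ (eventA R R' x x' q k)ᶜ

set_option linter.unusedSectionVars false
set_option maxHeartbeats 1000000

section Aux
variable {X Ω₀ : Type*} [MetricSpace X] [SecondCountableTopology X] [MeasurableSpace X] [BorelSpace X] [MeasurableSpace Ω₀]
variable (R R' : X → X → Ω₀ → X) (x x' : X)

lemma chain_congr (n : ℕ) (ω ω' : ℕ → Ω₀) (h : ∀ i, i < n → ω i = ω' i) :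
    chain R R' x x' n ω = chain R R' x x' n ω' := by
  induction n with
  | zero => rfl
  | succ n ih =>
    have h1 : ∀ i, i < n → ω i = ω' i := fun i hi => h i (hi.trans (Nat.lt_succ_self n))
    simp only [chain, ih h1, h n (Nat.lt_succ_self n)]

lemma eventA_congr (q : ℝ) (j : ℕ) (ω ω' : ℕ → Ω₀) (h : ∀ i, i < j + 1 → ω i = ω' i) :
    ω ∈ eventA R R' x x' q j ↔ ω' ∈ eventA R R' x x' q j := by
  unfold eventA
  rw [Set.mem_setOf_eq, Set.mem_setOf_eq, chain_congr R R' x x' (j+1) ω ω' h,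
    chain_congr R R' x x' j ω ω' (fun i hi => h i (hi.trans (Nat.lt_succ_self j)))]

lemma mem_eventB_iff (q : ℝ) (k : ℕ) (ω : ℕ → Ω₀) :
    ω ∈ eventB R R' x x' q k ↔ ∀ j, j < k → ω ∈ eventA R R' x x' q j := by
  simp [eventB]

lemma eventB_congr (q : ℝ) (k : ℕ) (ω ω' : ℕ → Ω₀) (h : ∀ i, i < k → ω i = ω' i) :
    ω ∈ eventB R R' x x' q k ↔ ω' ∈ eventB R R' x x' q k := by
  rw [mem_eventB_iff, mem_eventB_iff]
  exact forall₂_congr fun j hj =>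
    eventA_congr R R' x x' q j ω ω' fun i hi => h i (by omega)

lemma dist_chain_le (q : ℝ) (hq0 : 0 ≤ q) (n : ℕ) (ω : ℕ → Ω₀)
    (h : ∀ j, j < n → ω ∈ eventA R R' x x' q j) :
    dist (chain R R' x x' n ω).1 (chain R R' x x' n ω).2 ≤ q ^ n * dist x x' := by
  induction n with
  | zero => simp [chain]
  | succ n ih =>
    have h2 := h n (Nat.lt_succ_self n)
    calc dist (chain R R' x x' (n+1) ω).1 (chain R R' x x' (n+1) ω).2
        ≤ q * dist (chain R R' x x' n ω).1 (chain R R' x x' n ω).2 := h2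
      _ ≤ q * (q ^ n * dist x x') :=
          mul_le_mul_of_nonneg_left (ih fun j hj => h j (hj.trans (Nat.lt_succ_self n))) hq0
      _ = q ^ (n+1) * dist x x' := by ring

lemma chain_measurable
    (hRmeas : Measurable fun p : (X × X) × Ω₀ => R p.1.1 p.1.2 p.2)
    (hR'meas : Measurable fun p : (X × X) × Ω₀ => R' p.1.1 p.1.2 p.2) (n : ℕ) :
    Measurable (chain R R' x x' n) := by
  induction n with
  | zero => exact measurable_const
  | succ n ih =>
    have h1 : Measurable fun ω : ℕ → Ω₀ => (chain R R' x x' n ω, ω n) :=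
      ih.prodMk (measurable_pi_apply n)
    exact (hRmeas.comp h1).prodMk (hR'meas.comp h1)

lemma measurableSet_eventA
    (hRmeas : Measurable fun p : (X × X) × Ω₀ => R p.1.1 p.1.2 p.2)
    (hR'meas : Measurable fun p : (X × X) × Ω₀ => R' p.1.1 p.1.2 p.2) (q : ℝ) (j : ℕ) :
    MeasurableSet (eventA R R' x x' q j) := by
  have h1 := chain_measurable R R' x x' hRmeas hR'meas (j+1)
  have h2 := chain_measurable R R' x x' hRmeas hR'meas j
  exact measurableSet_le (h1.fst.dist h1.snd) (measurable_const.mul (h2.fst.dist h2.snd))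

lemma measurableSet_eventC
    (hRmeas : Measurable fun p : (X × X) × Ω₀ => R p.1.1 p.1.2 p.2)
    (hR'meas : Measurable fun p : (X × X) × Ω₀ => R' p.1.1 p.1.2 p.2) (q : ℝ) (k : ℕ) :
    MeasurableSet (eventC R R' x x' q k) := by
  refine MeasurableSet.inter ?_ (measurableSet_eventA R R' x x' hRmeas hR'meas q k).compl
  exact MeasurableSet.biInter (Set.to_countable _)
    fun j _ => measurableSet_eventA R R' x x' hRmeas hR'meas q j

end Aux

/-- Conditional probability estimate for the bad events of the coupled
chain: `E[1_{C_k} | F_k] ≤ C·q^k·d(x,x')` almost surely, where `F_k` is the σ-algebra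
generated by the coordinates `ω_0, …, ω_{k−1}`. -/
theorem bad_event_conditional_estimate
    {X : Type*} [MetricSpace X] [CompactSpace X] [MeasurableSpace X] [BorelSpace X]
    (κ : X → Measure X) (hκmeas : Measurable κ)
    (hκprob : ∀ x, IsProbabilityMeasure (κ x))
    {Ω₀ : Type*} [MeasurableSpace Ω₀] (P₀ : Measure Ω₀) [IsProbabilityMeasure P₀]
    (q : ℝ) (hq0 : 0 ≤ q) (hq1 : q < 1) (C : ℝ) (hC : 0 < C)
    (R R' : X → X → Ω₀ → X)
    (hRmeas : Measurable fun p : (X × X) × Ω₀ => R p.1.1 p.1.2 p.2)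
    (hR'meas : Measurable fun p : (X × X) × Ω₀ => R' p.1.1 p.1.2 p.2)
    (hRlaw : ∀ x x' : X, Measure.map (R x x') P₀ = κ x)
    (hR'law : ∀ x x' : X, Measure.map (R' x x') P₀ = κ x')
    (hcouple : ∀ x x' : X,
      P₀ {ω | q * dist x x' < dist (R x x' ω) (R' x x' ω)} ≤ ENNReal.ofReal (C * dist x x'))
    -- `P` is the countable product measure `P₀^{⊗ℕ}` on `Ω = Ω₀^ℕ`
    (P : Measure (ℕ → Ω₀)) [IsProbabilityMeasure P]
    (hP : ∀ n : ℕ, Measure.map (fun ω (i : Fin n) => ω i) P = Measure.pi fun _ : Fin n => P₀)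
    (x x' : X) (k : ℕ) :
    ∀ᵐ ω ∂P,
      (P[(eventC R R' x x' q k).indicator (fun _ => (1 : ℝ))
          | MeasurableSpace.comap (fun ω' (i : Fin k) => ω' i) inferInstance]) ω
        ≤ C * q ^ k * dist x x' := by
  classical
  have hπ : ∀ n : ℕ, Measurable fun ω : ℕ → Ω₀ => fun i : Fin n => (ω i : Ω₀) := fun n =>
    measurable_pi_iff.mpr fun i => measurable_pi_apply _
  have hm : MeasurableSpace.comap (fun ω' (i : Fin k) => ω' i) inferInstance ≤ (inferInstance : MeasurableSpace (ℕ → Ω₀)) := (hπ k).comap_le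
  have hd0 : (0:ℝ) ≤ dist x x' := dist_nonneg
  set c : ℝ := C * q ^ k * dist x x' with hc_def
  have hc0 : 0 ≤ c := by positivity
  have hCmeas : MeasurableSet (eventC R R' x x' q k) :=
    measurableSet_eventC R R' x x' hRmeas hR'meas q k
  -- Ω₀ is nonempty since it carries a probability measure
  have hne : Nonempty Ω₀ := by
    by_contra h
    rw [not_nonempty_iff] at h
    have h1 : P₀ Set.univ = 1 := measure_univ
    rw [Set.univ_eq_empty_iff.mpr h, measure_empty] at h1
    exact zero_ne_one h1
  obtain ⟨ω₀⟩ := hne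
  -- extension of a finite word to an infinite one
  set ext : ∀ n : ℕ, (Fin n → Ω₀) → (ℕ → Ω₀) :=
    fun n v i => if h : i < n then v ⟨i, h⟩ else ω₀ with hext_def
  have hext_meas : ∀ n, Measurable (ext n) := by
    intro n
    refine measurable_pi_iff.mpr fun i => ?_
    by_cases h : i < n
    · simpa [ext, h] using measurable_pi_apply (⟨i, h⟩ : Fin n)
    · simpa [ext, h] using (measurable_const : Measurable fun _ : Fin n → Ω₀ => ω₀)
  have hext_agree : ∀ n (ω : ℕ → Ω₀) (i : ℕ), i < n → ext n (fun j : Fin n => ω j) i = ω i :=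
    fun n ω i hi => by simp [ext, hi]
  -- congruence for eventC
  have hCcongr : ∀ ω ω' : ℕ → Ω₀, (∀ i, i < k + 1 → ω i = ω' i) →
      (ω ∈ eventC R R' x x' q k ↔ ω' ∈ eventC R R' x x' q k) := by
    intro ω ω' h
    unfold eventC
    rw [Set.mem_inter_iff, Set.mem_inter_iff, Set.mem_compl_iff, Set.mem_compl_iff,
      eventB_congr R R' x x' q k ω ω' (fun i hi => h i (by omega)),
      eventA_congr R R' x x' q k ω ω' h]
  -- THE CORE MEASURE ESTIMATE
  have core : ∀ T : Set (Fin k → Ω₀), MeasurableSet T →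
      P (eventC R R' x x' q k ∩ (fun ω (i : Fin k) => ω i) ⁻¹' T)
        ≤ ENNReal.ofReal c * P ((fun ω (i : Fin k) => ω i) ⁻¹' T) := by
    intro T hT
    have hres_meas : Measurable fun v : Fin (k+1) → Ω₀ => fun i : Fin k => v i.castSucc :=
      measurable_pi_iff.mpr fun i => measurable_pi_apply _
    have hDmeas : MeasurableSet (ext (k+1) ⁻¹' (eventC R R' x x' q k)) :=
      (hext_meas (k+1)) hCmeas
    have hT'meas : MeasurableSet
        ((fun v : Fin (k+1) → Ω₀ => fun i : Fin k => v i.castSucc) ⁻¹' T) := hres_meas hT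
    have hpre : (fun ω : ℕ → Ω₀ => fun i : Fin (k+1) => ω i) ⁻¹'
          (ext (k+1) ⁻¹' (eventC R R' x x' q k) ∩
            (fun v : Fin (k+1) → Ω₀ => fun i : Fin k => v i.castSucc) ⁻¹' T)
        = eventC R R' x x' q k ∩ (fun ω (i : Fin k) => ω i) ⁻¹' T := by
      ext ω
      simp only [Set.mem_preimage, Set.mem_inter_iff]
      have hA : ext (k+1) (fun i : Fin (k+1) => ω i) ∈ eventC R R' x x' q k
          ↔ ω ∈ eventC R R' x x' q k :=
        hCcongr _ _ fun i hi => hext_agree (k+1) ω i hi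
      have hB : (fun i : Fin k => ω ((i.castSucc : Fin (k+1)) : ℕ)) = fun i : Fin k => ω i :=
        funext fun i => by simp
      rw [hA]
      constructor
      · rintro ⟨h1, h2⟩; exact ⟨h1, by rwa [hB] at h2⟩
      · rintro ⟨h1, h2⟩; exact ⟨h1, by rwa [hB]⟩
    rw [← hpre, ← Measure.map_apply (hπ (k+1)) (hDmeas.inter hT'meas), hP (k+1)]
    set e := MeasurableEquiv.piFinSuccAbove (fun _ : Fin (k+1) => Ω₀) (Fin.last k) with he_def
    have mp := measurePreserving_piFinSuccAbove (fun _ : Fin (k+1) => P₀) (Fin.last k)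
    set W : Set (Ω₀ × (Fin k → Ω₀)) := e.symm ⁻¹'
      (ext (k+1) ⁻¹' (eventC R R' x x' q k) ∩
        (fun v : Fin (k+1) → Ω₀ => fun i : Fin k => v i.castSucc) ⁻¹' T) with hW_def
    have hWmeas : MeasurableSet W := e.symm.measurable (hDmeas.inter hT'meas)
    have hsplit : (Measure.pi fun _ : Fin (k+1) => P₀)
        (ext (k+1) ⁻¹' (eventC R R' x x' q k) ∩
          (fun v : Fin (k+1) → Ω₀ => fun i : Fin k => v i.castSucc) ⁻¹' T)
        = (P₀.prod (Measure.pi fun _ : Fin k => P₀)) W := by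
      have h1 : ext (k+1) ⁻¹' (eventC R R' x x' q k) ∩
          (fun v : Fin (k+1) → Ω₀ => fun i : Fin k => v i.castSucc) ⁻¹' T = e ⁻¹' W := by
        rw [hW_def]; ext v; simp
      rw [h1, mp.measure_preimage hWmeas.nullMeasurableSet]
    have hv_last : ∀ (a : Ω₀) (u : Fin k → Ω₀), e.symm (a, u) (Fin.last k) = a := by
      intro a u
      simp [he_def, MeasurableEquiv.piFinSuccAbove_symm_apply]
    have hv_cast : ∀ (a : Ω₀) (u : Fin k → Ω₀) (i : Fin k), e.symm (a, u) i.castSucc = u i := by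
      intro a u i
      rw [show (i.castSucc) = (Fin.last k).succAbove i from (Fin.succAbove_last_apply i).symm]
      simp [he_def, MeasurableEquiv.piFinSuccAbove_symm_apply]
    have hmem : ∀ (u : Fin k → Ω₀) (a : Ω₀), ((a, u) ∈ W ↔
        (u ∈ T ∧ ext k u ∈ eventB R R' x x' q k ∧
          q * dist (chain R R' x x' k (ext k u)).1 (chain R R' x x' k (ext k u)).2
            < dist (R (chain R R' x x' k (ext k u)).1 (chain R R' x x' k (ext k u)).2 a)
              (R' (chain R R' x x' k (ext k u)).1 (chain R R' x x' k (ext k u)).2 a))) := by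
      intro u a
      rw [hW_def]
      simp only [Set.mem_preimage, Set.mem_inter_iff]
      set v : Fin (k+1) → Ω₀ := e.symm (a, u) with hv_def
      set ωv : ℕ → Ω₀ := ext (k+1) v with hωv_def
      have hagree : ∀ i, i < k → ωv i = ext k u i := by
        intro i hi
        have h1 : ωv i = v ⟨i, by omega⟩ := by
          simp only [hωv_def, hext_def]
          rw [dif_pos (by omega : i < k + 1)]
        have h2 : (⟨i, by omega⟩ : Fin (k+1)) = (⟨i, hi⟩ : Fin k).castSucc := rfl
        have h3 : ext k u i = u ⟨i, hi⟩ := by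
          simp only [hext_def]
          rw [dif_pos hi]
        rw [h1, h2, hv_def, hv_cast, h3]
      have hωvk : ωv k = a := by
        have h1 : ωv k = v ⟨k, by omega⟩ := by
          simp only [hωv_def, hext_def]
          rw [dif_pos (by omega : k < k + 1)]
        have h2 : (⟨k, by omega⟩ : Fin (k+1)) = Fin.last k := rfl
        rw [h1, h2, hv_def, hv_last]
      have hchaink : chain R R' x x' k ωv = chain R R' x x' k (ext k u) :=
        chain_congr R R' x x' k _ _ hagree
      have hTpart : ((fun i : Fin k => v i.castSucc) ∈ T) ↔ u ∈ T := by
        have h4 : (fun i : Fin k => v i.castSucc) = u := funext fun i => by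
          rw [hv_def, hv_cast]
        rw [h4]
      have hBpart : ωv ∈ eventB R R' x x' q k ↔ ext k u ∈ eventB R R' x x' q k :=
        eventB_congr R R' x x' q k _ _ hagree
      have hApart : ωv ∈ eventA R R' x x' q k ↔
          dist (R (chain R R' x x' k (ext k u)).1 (chain R R' x x' k (ext k u)).2 a)
            (R' (chain R R' x x' k (ext k u)).1 (chain R R' x x' k (ext k u)).2 a)
          ≤ q * dist (chain R R' x x' k (ext k u)).1 (chain R R' x x' k (ext k u)).2 := by
        unfold eventA
        rw [Set.mem_setOf_eq]
        have hstep : chain R R' x x' (k+1) ωv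
            = (R (chain R R' x x' k ωv).1 (chain R R' x x' k ωv).2 (ωv k),
               R' (chain R R' x x' k ωv).1 (chain R R' x x' k ωv).2 (ωv k)) := rfl
        rw [hstep, hchaink, hωvk]
      show ωv ∈ eventC R R' x x' q k ∧ (fun i : Fin k => v i.castSucc) ∈ T ↔ _
      unfold eventC
      rw [Set.mem_inter_iff, Set.mem_compl_iff, hBpart, hApart, hTpart, not_le]
      tauto
    have hslice : ∀ u : Fin k → Ω₀,
        P₀ ((fun a => (a, u)) ⁻¹' W) ≤ T.indicator (fun _ => ENNReal.ofReal c) u := by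
      intro u
      by_cases hu : u ∈ T ∧ ext k u ∈ eventB R R' x x' q k
      · obtain ⟨huT, huB⟩ := hu
        have hset : (fun a => (a, u)) ⁻¹' W =
            {a | q * dist (chain R R' x x' k (ext k u)).1 (chain R R' x x' k (ext k u)).2
              < dist (R (chain R R' x x' k (ext k u)).1 (chain R R' x x' k (ext k u)).2 a)
                (R' (chain R R' x x' k (ext k u)).1 (chain R R' x x' k (ext k u)).2 a)} := by
          ext a
          simp only [Set.mem_preimage, Set.mem_setOf_eq, hmem u a, huT, huB, true_and]
        have hdist : dist (chain R R' x x' k (ext k u)).1 (chain R R' x x' k (ext k u)).2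
            ≤ q ^ k * dist x x' :=
          dist_chain_le R R' x x' q hq0 k _ ((mem_eventB_iff R R' x x' q k _).mp huB)
        have hcc : C * dist (chain R R' x x' k (ext k u)).1 (chain R R' x x' k (ext k u)).2
            ≤ c := by
          rw [hc_def, mul_assoc]
          exact mul_le_mul_of_nonneg_left hdist hC.le
        rw [Set.indicator_of_mem huT, hset]
        exact (hcouple _ _).trans (ENNReal.ofReal_le_ofReal hcc)
      · have hempty : (fun a => (a, u)) ⁻¹' W = ∅ := by
          ext a
          simp only [Set.mem_preimage, Set.mem_empty_iff_false, iff_false, hmem u a]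
          tauto
        simp [hempty]
    have hPT : P ((fun ω (i : Fin k) => ω i) ⁻¹' T) = (Measure.pi fun _ : Fin k => P₀) T := by
      rw [← hP k, Measure.map_apply (hπ k) hT]
    rw [hsplit, Measure.prod_apply_symm hWmeas, hPT]
    calc ∫⁻ u, P₀ ((fun a => (a, u)) ⁻¹' W) ∂(Measure.pi fun _ : Fin k => P₀)
        ≤ ∫⁻ u, T.indicator (fun _ => ENNReal.ofReal c) u ∂(Measure.pi fun _ : Fin k => P₀) :=
          lintegral_mono hslice
      _ = ENNReal.ofReal c * (Measure.pi fun _ : Fin k => P₀) T := by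
          rw [lintegral_indicator hT, setLIntegral_const]
  -- conditional expectation step
  set f₀ : (ℕ → Ω₀) → ℝ := (eventC R R' x x' q k).indicator (fun _ => (1 : ℝ)) with hf₀_def
  have hf₀int : Integrable f₀ P := (integrable_const (1:ℝ)).indicator hCmeas
  set g : (ℕ → Ω₀) → ℝ := P[f₀ | MeasurableSpace.comap (fun ω' (i : Fin k) => ω' i) inferInstance] with hg_def
  set F : (ℕ → Ω₀) → ℝ := fun ω => c - g ω with hF_def
  have h_sm : StronglyMeasurable[MeasurableSpace.comap (fun ω' (i : Fin k) => ω' i) inferInstance] F :=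
    stronglyMeasurable_const.sub stronglyMeasurable_condExp
  have h_int : Integrable F P := (integrable_const c).sub integrable_condExp
  haveI : SigmaFinite (P.trim hm) := (isFiniteMeasure_trim hm).toSigmaFinite
  have hFnn : 0 ≤ᵐ[P.trim hm] F := by
    refine ae_nonneg_of_forall_setIntegral_nonneg (h_int.trim hm h_sm) ?_
    intro s hs _
    rw [← setIntegral_trim hm h_sm hs]
    obtain ⟨T, hT, rfl⟩ := MeasurableSpace.measurableSet_comap.mp hs
    set s : Set (ℕ → Ω₀) := (fun ω (i : Fin k) => ω i) ⁻¹' T with hs_def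
    have hsm : MeasurableSet[MeasurableSpace.comap (fun ω' (i : Fin k) => ω' i) inferInstance] s := ⟨T, hT, rfl⟩
    have hs0 : MeasurableSet s := hm _ hsm
    have hcore := core T hT
    have hg_int : ∫ x in s, g x ∂P = (P (eventC R R' x x' q k ∩ s)).toReal := by
      rw [hg_def, setIntegral_condExp hm hf₀int hsm, hf₀_def,
        setIntegral_indicator hCmeas, setIntegral_const, smul_eq_mul, mul_one, Set.inter_comm, Measure.real_def]
    have hbound : (P (eventC R R' x x' q k ∩ s)).toReal ≤ c * (P s).toReal := by
      have h1 : (P (eventC R R' x x' q k ∩ s)).toReal ≤ (ENNReal.ofReal c * P s).toReal :=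
        ENNReal.toReal_mono (ENNReal.mul_ne_top ENNReal.ofReal_ne_top (measure_ne_top P s)) hcore
      rwa [ENNReal.toReal_mul, ENNReal.toReal_ofReal hc0] at h1
    have : ∫ x in s, F x ∂P = (P s).toReal * c - ∫ x in s, g x ∂P := by
      rw [hF_def]
      rw [integral_sub (integrable_const c).integrableOn integrable_condExp.integrableOn,
        setIntegral_const, smul_eq_mul, Measure.real_def]
    rw [this, hg_int]
    linarith [hbound, mul_comm c (P s).toReal ▸ hbound]
  have hae : 0 ≤ᵐ[P] F := ae_le_of_ae_le_trim hFnn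
  filter_upwards [hae] with ω hω
  have : g ω ≤ c := by simpa [hF_def, sub_nonneg] using hω
  exact this
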